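/- arXiv:1112.3546 — 2 statements merged into one kernel-verified Lean document; each statement's English description precedes it below -/
import Mathlib

section
/- Assume (AU) with bound N, and let Φ : ℤ → ℝ solve the γ-eigenproblem and satisfy (AΦ). Then in the restriction of the saturation graph to any interval [−N−l, N+l] with l ≥ 1 every node has an outgoing edge: for every integer l ≥ 1 and every i with −N−l ≤ i ≤ N+l, either (i+1 ≤ N+l and Φ (i+1) + γ i − k = Φ i) or (i−1 ≥ −N−l and Φ (i−1) + γ i = Φ i). The same holds with δ in place of γ. -/
/-- `γ i = min (u i) (1 - u (i-1))`. -/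
noncomputable def gam (u : ℤ → ℝ) (i : ℤ) : ℝ := min (u i) (1 - u (i - 1))

/-- `δ i = min (u (i-1)) (1 - u i)`. -/
noncomputable def del (u : ℤ → ℝ) (i : ℤ) : ℝ := min (u (i - 1)) (1 - u i)

/-- `Φ` solves the γ-eigenproblem. -/
def SolvesG (u : ℤ → ℝ) (k : ℝ) (Φ : ℤ → ℝ) : Prop :=
  ∀ i : ℤ, max (Φ (i + 1) + gam u i - k) (Φ (i - 1) + gam u i) = Φ i

/-- `Φ` solves the δ-eigenproblem. -/
def SolvesD (u : ℤ → ℝ) (k : ℝ) (Φ : ℤ → ℝ) : Prop :=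
  ∀ i : ℤ, max (Φ (i + 1) + del u i - k) (Φ (i - 1) + del u i) = Φ i

/-- Condition (AΦ). -/
def APhi (k : ℝ) (Φ : ℤ → ℝ) : Prop :=
  ∀ M : ℤ, (∃ N' : ℤ, M ≤ N' ∧ Φ (N' + 1) = Φ N') ∧
    (∃ N'' : ℤ, M ≤ N'' ∧ Φ (-N'' - 1) = Φ (-N'') - k)

lemma max_left_of_right_lt {a b m : ℝ} (h : max a b = m) (hb : b < m) : a = m := by
  rcases max_choice a b with h' | h' <;> rw [h'] at h
  · exact h
  · exact absurd h (ne_of_lt hb)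

/-- Key abstract lemma: works for any nonnegative coefficient function vanishing
outside `[-N+1, N]`. -/
lemma key (c : ℤ → ℝ) (hc : ∀ i, 0 ≤ c i) (k : ℝ) (N : ℕ)
    (hcr : ∀ i : ℤ, (N : ℤ) + 1 ≤ i → c i = 0)
    (hcl : ∀ i : ℤ, i ≤ -(N : ℤ) → c i = 0)
    (Φ : ℤ → ℝ)
    (hΦ : ∀ i : ℤ, max (Φ (i + 1) + c i - k) (Φ (i - 1) + c i) = Φ i)
    (hA : APhi k Φ) :
    ∀ l : ℤ, 1 ≤ l → ∀ i : ℤ, -(N : ℤ) - l ≤ i → i ≤ (N : ℤ) + l →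
      (i + 1 ≤ (N : ℤ) + l ∧ Φ (i + 1) + c i - k = Φ i) ∨
      (-(N : ℤ) - l ≤ i - 1 ∧ Φ (i - 1) + c i = Φ i) := by
  have fwd_le : ∀ i : ℤ, Φ (i + 1) + c i - k ≤ Φ i := by
    intro i
    have := le_max_left (Φ (i + 1) + c i - k) (Φ (i - 1) + c i)
    rw [hΦ i] at this; exact this
  have bwd_le : ∀ i : ℤ, Φ (i - 1) + c i ≤ Φ i := by
    intro i
    have := le_max_right (Φ (i + 1) + c i - k) (Φ (i - 1) + c i)
    rw [hΦ i] at this; exact this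
  have cases' : ∀ i : ℤ, Φ (i + 1) + c i - k = Φ i ∨ Φ (i - 1) + c i = Φ i := by
    intro i
    rcases max_choice (Φ (i + 1) + c i - k) (Φ (i - 1) + c i) with h | h
    · left; rw [← hΦ i, h]
    · right; rw [← hΦ i, h]
  intro l hl i hil hir
  by_cases hR : i + 1 ≤ (N : ℤ) + l
  · by_cases hL : -(N : ℤ) - l ≤ i - 1
    · rcases cases' i with h | h
      · exact Or.inl ⟨hR, h⟩
      · exact Or.inr ⟨hL, h⟩
    · -- left boundary: i = -N - l ≤ -N - 1
      have hi : i ≤ -(N : ℤ) - 1 := by omega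
      have hci : c i = 0 := hcl i (by omega)
      left
      refine ⟨hR, ?_⟩
      rcases cases' i with h | h
      · exact h
      · -- backward saturated: Φ (i-1) = Φ i; derive forward anyway or contradiction
        rw [hci, add_zero] at h
        by_contra hne
        have hlt : Φ (i + 1) + c i - k < Φ i := lt_of_le_of_ne (fwd_le i) hne
        rw [hci, add_zero] at hlt
        rcases le_or_gt k 0 with hk | hk
        · -- k ≤ 0: Φ (i+1) ≥ Φ i + c (i+1), contradiction
          have h2 := bwd_le (i + 1)
          simp only [add_sub_cancel_right] at h2
          have := hc (i + 1)
          linarith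
        · -- k > 0: Φ (j-1) = Φ j for all j ≤ i, contradicting (AΦ)
          have step : ∀ j : ℤ, j ≤ i → Φ (j - 1) = Φ j := by
            intro j hj
            refine Int.le_induction_down (motive := fun j _ => Φ (j - 1) = Φ j)
              h (fun j hj ih => ?_) j hj
            have hcj : c (j - 1) = 0 := hcl _ (by omega)
            have e := hΦ (j - 1)
            rw [hcj, add_zero, add_zero, sub_add_cancel] at e
            have hb : Φ j - k < Φ (j - 1) := by rw [ih]; linarith
            rw [max_comm] at e
            exact max_left_of_right_lt e hb
          obtain ⟨N'', hN'', hval⟩ := (hA (-i)).2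
          have := step (-N'') (by omega)
          rw [show -N'' - 1 = -N'' - 1 from rfl] at this
          rw [hval] at this
          linarith
  · -- right boundary: i = N + l ≥ N + 1
    have hi : (N : ℤ) + 1 ≤ i := by omega
    have hci : c i = 0 := hcr i hi
    right
    refine ⟨by omega, ?_⟩
    rcases cases' i with h | h
    · -- forward saturated; derive backward anyway or contradiction
      rw [hci, add_zero] at h
      by_contra hne
      have hlt : Φ (i - 1) + c i < Φ i := lt_of_le_of_ne (bwd_le i) hne
      rw [hci, add_zero] at hlt
      rcases le_or_gt k 0 with hk | hk
      · -- k ≤ 0: Φ (i-1) ≥ Φ i + c (i-1) - k, contradiction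
        have h2 := fwd_le (i - 1)
        simp only [sub_add_cancel] at h2
        have := hc (i - 1)
        linarith
      · -- k > 0: Φ (j+1) = Φ j + k for all j ≥ i, contradicting (AΦ)
        have step : ∀ j : ℤ, i ≤ j → Φ (j + 1) = Φ j + k := by
          intro j hj
          refine Int.le_induction (motive := fun j _ => Φ (j + 1) = Φ j + k)
            (by linarith) (fun j hj ih => ?_) j hj
          have hcj : c (j + 1) = 0 := hcr _ (by omega)
          have e := hΦ (j + 1)
          rw [hcj, add_zero, add_zero, add_sub_cancel_right] at e
          have hb : Φ j < Φ (j + 1) := by rw [ih]; linarith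
          linarith [max_left_of_right_lt e hb]
        obtain ⟨N', hN', hval⟩ := (hA i).1
        have := step N' hN'
        rw [hval] at this
        linarith
    · exact h

/-- In the restriction of the saturation graph to any interval `[-N-l, N+l]`
with `l ≥ 1`, every node has an outgoing edge; both for the γ- and the δ-eigenproblem. -/
theorem stmt_5 (u : ℤ → ℝ) (hu : ∀ i : ℤ, 0 ≤ u i ∧ u i ≤ 1) (k : ℝ)
    (N : ℕ) (hN : 0 < N) (hAU : ∀ i : ℤ, ((N : ℤ) ≤ i ∨ i ≤ -(N : ℤ)) → u i = 0) :
    (∀ Φ : ℤ → ℝ, SolvesG u k Φ → APhi k Φ →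
      ∀ l : ℤ, 1 ≤ l → ∀ i : ℤ, -(N : ℤ) - l ≤ i → i ≤ (N : ℤ) + l →
        (i + 1 ≤ (N : ℤ) + l ∧ Φ (i + 1) + gam u i - k = Φ i) ∨
        (-(N : ℤ) - l ≤ i - 1 ∧ Φ (i - 1) + gam u i = Φ i)) ∧
    (∀ Φ : ℤ → ℝ, SolvesD u k Φ → APhi k Φ →
      ∀ l : ℤ, 1 ≤ l → ∀ i : ℤ, -(N : ℤ) - l ≤ i → i ≤ (N : ℤ) + l →
        (i + 1 ≤ (N : ℤ) + l ∧ Φ (i + 1) + del u i - k = Φ i) ∨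
        (-(N : ℤ) - l ≤ i - 1 ∧ Φ (i - 1) + del u i = Φ i)) := by
  constructor
  · intro Φ hS hA
    exact key (gam u)
      (fun i => le_min (hu i).1 (by linarith [(hu (i - 1)).2]))
      k N
      (fun i hi => by
        unfold gam; rw [hAU i (Or.inl (by omega))]
        exact min_eq_left (by linarith [(hu (i - 1)).2]))
      (fun i hi => by
        unfold gam; rw [hAU i (Or.inr hi)]
        exact min_eq_left (by linarith [(hu (i - 1)).2]))
      Φ hS hA
  · intro Φ hS hA
    exact key (del u)
      (fun i => le_min (hu (i - 1)).1 (by linarith [(hu i).2]))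
      k N
      (fun i hi => by
        unfold del; rw [hAU (i - 1) (Or.inl (by omega))]
        exact min_eq_left (by linarith [(hu i).2]))
      (fun i hi => by
        unfold del; rw [hAU (i - 1) (Or.inr (by omega))]
        exact min_eq_left (by linarith [(hu i).2]))
      Φ hS hA
end

section
/- Assume (AU) with bound N, let (l, s) be a soliton of u (case C2), and set k = 1. Then: (a) there exists Φ¹ : ℤ → ℝ satisfying the γ-fundamental relations at l, any two such functions differ by an additive constant, and every such Φ¹ solves the γ-eigenproblem (with k = 1) and satisfies (AΦ); (b) there exists Φ² : ℤ → ℝ satisfying the δ-fundamental relations at (l, s), any two such differ by an additive constant, and every such Φ² solves the δ-eigenproblem (with k = 1) and satisfies (AΦ). Moreover the relations evaluate to: for i ≤ l, Φ¹ i − Φ¹ (i+1) = u i − 1 if u (i−1) + u i < 1 and = −u (i−1) if u (i−1) + u i ≥ 1; for i ≥ l, Φ¹ (i+1) − Φ¹ i = u (i+1) if u i + u (i+1) < 1 and = 1 − u i if u i + u (i+1) ≥ 1; for i ≤ l+s−1, Φ² i − Φ² (i+1) = u (i−1) − 1 if u (i−1) + u i < 1 and = −u i if u (i−1) + u i ≥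 1; for i ≥ l+s, Φ² (i+1) − Φ² i = u i if u i + u (i+1) < 1 and = 1 − u (i+1) if u i + u (i+1) ≥ 1. -/
/-- A soliton of `u` at level `v` (case C1). -/
def SolitonC1 (u : ℤ → ℝ) (l : ℤ) (s : ℕ) (v : ℝ) : Prop :=
  1 ≤ s ∧ (∀ i : ℤ, u i + u (i + 1) ≤ v) ∧ v ≤ 1 ∧
  (∀ i : ℤ, l ≤ i → i ≤ l + (s : ℤ) - 1 → u i + u (i + 1) = v) ∧
  u (l - 1) + u l < v ∧ u (l + (s : ℤ)) + u (l + (s : ℤ) + 1) < v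

/-- A soliton of `u` (case C2). -/
def SolitonC2 (u : ℤ → ℝ) (l : ℤ) (s : ℕ) : Prop :=
  1 ≤ s ∧ (∀ i : ℤ, l ≤ i → i ≤ l + (s : ℤ) - 1 → 1 ≤ u i + u (i + 1)) ∧
  u (l - 1) + u l < 1 ∧ u (l + (s : ℤ)) + u (l + (s : ℤ) + 1) < 1

/-- `Φ` satisfies the γ-fundamental relations at `l`. -/
def FundG (u : ℤ → ℝ) (k : ℝ) (l : ℤ) (Φ : ℤ → ℝ) : Prop :=
  (∀ i : ℤ, i ≤ l → Φ i - Φ (i + 1) = gam u i - k) ∧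
  (∀ i : ℤ, l ≤ i → Φ (i + 1) - Φ i = gam u (i + 1))

/-- `Φ` satisfies the δ-fundamental relations at `(l, s)`. -/
def FundD (u : ℤ → ℝ) (k : ℝ) (l : ℤ) (s : ℕ) (Φ : ℤ → ℝ) : Prop :=
  (∀ i : ℤ, i ≤ l + (s : ℤ) - 1 → Φ i - Φ (i + 1) = del u i - k) ∧
  (∀ i : ℤ, l + (s : ℤ) ≤ i → Φ (i + 1) - Φ i = del u (i + 1))


noncomputable def cumF (g : ℤ → ℝ) (i : ℤ) : ℝ :=
  if 0 ≤ i then ∑ j ∈ Finset.range i.toNat, g j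
  else -∑ j ∈ Finset.range (-i).toNat, g (-(j : ℤ) - 1)

lemma cumF_succ (g : ℤ → ℝ) (i : ℤ) : cumF g (i + 1) = cumF g i + g i := by
  rcases le_or_gt 0 i with h | h
  · rw [cumF, cumF, if_pos h, if_pos (by omega : (0:ℤ) ≤ i + 1)]
    have ht : (i + 1).toNat = i.toNat + 1 := by omega
    rw [ht, Finset.sum_range_succ, Int.toNat_of_nonneg h]
  · by_cases h1 : i = -1
    · subst h1
      norm_num [cumF, Finset.sum_range_one]
    · have h2 : i + 1 < 0 := by omega
      rw [cumF, cumF, if_neg (by omega), if_neg (by omega)]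
      have hn : (-i).toNat = (-(i + 1)).toNat + 1 := by omega
      rw [hn, Finset.sum_range_succ]
      have hc : (-(((-(i + 1)).toNat : ℤ)) - 1) = i := by omega
      rw [hc]
      ring

lemma exists_step (g : ℤ → ℝ) : ∃ Φ : ℤ → ℝ, ∀ i : ℤ, Φ (i + 1) = Φ i + g i :=
  ⟨cumF g, cumF_succ g⟩

lemma const_of_step (f : ℤ → ℝ) (h : ∀ i : ℤ, f (i + 1) = f i) : ∀ i : ℤ, f i = f 0 := by
  intro i
  induction i using Int.induction_on with
  | zero => rfl
  | succ n ih => rw [h]; exact ih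
  | pred n ih =>
      have := h (-(n : ℤ) - 1)
      rw [show (-(n:ℤ) - 1 + 1) = -(n:ℤ) from by ring] at this
      rw [← this]
      exact ih

lemma gam_two (u : ℤ → ℝ) (i : ℤ) : gam u i + gam u (i + 1) ≤ 1 := by
  have h1 : gam u i ≤ u i := min_le_left _ _
  have h2 : gam u (i + 1) ≤ 1 - u i := by
    rw [gam, show i + 1 - 1 = i from by ring]
    exact min_le_right _ _
  linarith

lemma del_two (u : ℤ → ℝ) (i : ℤ) : del u i + del u (i + 1) ≤ 1 := by
  have h1 : del u i ≤ 1 - u i := min_le_right _ _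
  have h2 : del u (i + 1) ≤ u i := by
    rw [del, show i + 1 - 1 = i from by ring]
    exact min_le_left _ _
  linarith


/-- Case C2. For a soliton `(l, s)` of `u` with `k = 1`: the γ- and
δ-fundamental eigenvectors exist, are unique up to an additive constant, solve the respective
eigenproblems and satisfy (AΦ); moreover the fundamental relations evaluate explicitly in
terms of `u`, with the case split on `u (i-1) + u i < 1` resp. `u i + u (i+1) < 1`. -/
theorem stmt_11 (u : ℤ → ℝ) (hu : ∀ i : ℤ, 0 ≤ u i ∧ u i ≤ 1)
    (N : ℕ) (hN : 0 < N) (hAU : ∀ i : ℤ, ((N : ℤ) ≤ i ∨ i ≤ -(N : ℤ)) → u i = 0)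
    (l : ℤ) (s : ℕ) (hsol : SolitonC2 u l s) (k : ℝ) (hk : k = 1) :
    ((∃ Φ : ℤ → ℝ, FundG u k l Φ) ∧
     (∀ Φ Ψ : ℤ → ℝ, FundG u k l Φ → FundG u k l Ψ → ∃ c : ℝ, ∀ i : ℤ, Φ i = Ψ i + c) ∧
     (∀ Φ : ℤ → ℝ, FundG u k l Φ → SolvesG u k Φ ∧ APhi k Φ)) ∧
    ((∃ Φ : ℤ → ℝ, FundD u k l s Φ) ∧
     (∀ Φ Ψ : ℤ → ℝ, FundD u k l s Φ → FundD u k l s Ψ → ∃ c : ℝ, ∀ i : ℤ, Φ i = Ψ i + c) ∧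
     (∀ Φ : ℤ → ℝ, FundD u k l s Φ → SolvesD u k Φ ∧ APhi k Φ)) ∧
    (∀ Φ : ℤ → ℝ, FundG u k l Φ →
      (∀ i : ℤ, i ≤ l →
        (u (i - 1) + u i < 1 → Φ i - Φ (i + 1) = u i - 1) ∧
        (1 ≤ u (i - 1) + u i → Φ i - Φ (i + 1) = -u (i - 1))) ∧
      (∀ i : ℤ, l ≤ i →
        (u i + u (i + 1) < 1 → Φ (i + 1) - Φ i = u (i + 1)) ∧
        (1 ≤ u i + u (i + 1) → Φ (i + 1) - Φ i = 1 - u i))) ∧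
    (∀ Φ : ℤ → ℝ, FundD u k l s Φ →
      (∀ i : ℤ, i ≤ l + (s : ℤ) - 1 →
        (u (i - 1) + u i < 1 → Φ i - Φ (i + 1) = u (i - 1) - 1) ∧
        (1 ≤ u (i - 1) + u i → Φ i - Φ (i + 1) = -u i)) ∧
      (∀ i : ℤ, l + (s : ℤ) ≤ i →
        (u i + u (i + 1) < 1 → Φ (i + 1) - Φ i = u i) ∧
        (1 ≤ u i + u (i + 1) → Φ (i + 1) - Φ i = 1 - u (i + 1)))) := by
  subst hk
  obtain ⟨hs, hmid, hleft, hright⟩ := hsol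
  have hs1 : (1 : ℤ) ≤ (s : ℤ) := by exact_mod_cast hs
  set L : ℤ := l + (s : ℤ) with hL
  -- basic facts
  have hγl : gam u l = u l := min_eq_left (by linarith)
  have hul : (1 : ℝ) ≤ u l + u (l + 1) := hmid l le_rfl (by omega)
  have hγl1 : gam u (l + 1) = 1 - u l := by
    rw [gam, show l + 1 - 1 = l from by ring]
    exact min_eq_right (by linarith)
  have huL : (1 : ℝ) ≤ u (L - 1) + u L := by
    have := hmid (L - 1) (by omega) (by omega)
    rwa [show L - 1 + 1 = L from by ring] at this
  have hδL : del u L = 1 - u L := min_eq_right (by linarith)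
  have hδL1 : del u (L + 1) = u L := by
    rw [del, show L + 1 - 1 = L from by ring]
    exact min_eq_left (by linarith [hright])
  -- Part (a)
  refine ⟨⟨?_, ?_, ?_⟩, ⟨?_, ?_, ?_⟩, ?_, ?_⟩
  · -- existence for γ
    obtain ⟨Φ, hΦ⟩ := exists_step (fun i => if l ≤ i then gam u (i + 1) else 1 - gam u i)
    refine ⟨Φ, ?_, ?_⟩
    · intro i hi
      have h := hΦ i
      rcases eq_or_lt_of_le hi with h1 | h1
      · subst h1
        rw [if_pos le_rfl] at h
        have : gam u i + gam u (i + 1) = 1 := by rw [hγl, hγl1]; ring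
        linarith
      · rw [if_neg (by omega)] at h
        linarith
    · intro i hi
      have h := hΦ i
      rw [if_pos hi] at h
      linarith
  · -- uniqueness for γ
    intro Φ Ψ hΦ hΨ
    have hstep : ∀ i : ℤ, (Φ i - Ψ i) = (Φ 0 - Ψ 0) := by
      apply const_of_step (fun i => Φ i - Ψ i)
      intro i
      rcases le_or_gt i l with h | h
      · have h1 := hΦ.1 i h
        have h2 := hΨ.1 i h
        show Φ (i + 1) - Ψ (i + 1) = Φ i - Ψ i
        linarith
      · have h1 := hΦ.2 i h.le
        have h2 := hΨ.2 i h.le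
        show Φ (i + 1) - Ψ (i + 1) = Φ i - Ψ i
        linarith
    exact ⟨Φ 0 - Ψ 0, fun i => by linarith [hstep i]⟩
  · -- solves + APhi for γ
    intro Φ hΦ
    constructor
    · intro i
      rcases le_or_gt i l with h | h
      · have h1 := hΦ.1 i h
        have h2 := hΦ.1 (i - 1) (by omega)
        rw [show i - 1 + 1 = i from by ring] at h2
        have hb := gam_two u (i - 1)
        rw [show i - 1 + 1 = i from by ring] at hb
        rw [max_eq_left (by linarith : Φ (i - 1) + gam u i ≤ Φ (i + 1) + gam u i - 1)]
        linarith
      · have h1 := hΦ.2 i h.le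
        have h2 := hΦ.2 (i - 1) (by omega)
        rw [show i - 1 + 1 = i from by ring] at h2
        have hb := gam_two u i
        rw [max_eq_right (by linarith : Φ (i + 1) + gam u i - 1 ≤ Φ (i - 1) + gam u i)]
        linarith
    · intro M
      constructor
      · refine ⟨max M (max l (N : ℤ)), le_max_left _ _, ?_⟩
        set N' := max M (max l (N : ℤ)) with hN'
        have hlN : l ≤ N' := le_trans (le_max_left l (N : ℤ)) (le_max_right M _)
        have h1 := hΦ.2 N' hlN
        have hu0 : u (N' + 1) = 0 := by
          apply hAU
          left
          have : (N : ℤ) ≤ N' := le_trans (le_max_right l (N : ℤ)) (le_max_right M _)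
          omega
        have hg : gam u (N' + 1) = 0 := by
          rw [gam, hu0]
          exact min_eq_left (by linarith [(hu (N' + 1 - 1)).2])
        linarith
      · refine ⟨max M (max (-l) (N : ℤ)), le_max_left _ _, ?_⟩
        set N'' := max M (max (-l) (N : ℤ)) with hN''
        have hlN : -l ≤ N'' := le_trans (le_max_left (-l) (N : ℤ)) (le_max_right M _)
        have hNN : (N : ℤ) ≤ N'' := le_trans (le_max_right (-l) (N : ℤ)) (le_max_right M _)
        have h1 := hΦ.1 (-N'' - 1) (by omega)
        rw [show -N'' - 1 + 1 = -N'' from by ring] at h1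
        have hu0 : u (-N'' - 1) = 0 := hAU _ (Or.inr (by omega))
        have hg : gam u (-N'' - 1) = 0 := by
          rw [gam, hu0]
          exact min_eq_left (by linarith [(hu (-N'' - 1 - 1)).2])
        linarith
  · -- existence for δ
    obtain ⟨Φ, hΦ⟩ := exists_step (fun i => if L ≤ i then del u (i + 1) else 1 - del u i)
    refine ⟨Φ, ?_, ?_⟩
    · intro i hi
      have h := hΦ i
      rw [if_neg (by omega)] at h
      linarith
    · intro i hi
      have h := hΦ i
      rw [if_pos hi] at h
      linarith
  · -- uniqueness for δ
    intro Φ Ψ hΦ hΨ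
    have hstep : ∀ i : ℤ, (Φ i - Ψ i) = (Φ 0 - Ψ 0) := by
      apply const_of_step (fun i => Φ i - Ψ i)
      intro i
      rcases le_or_gt i (L - 1) with h | h
      · have h1 := hΦ.1 i (by omega)
        have h2 := hΨ.1 i (by omega)
        show Φ (i + 1) - Ψ (i + 1) = Φ i - Ψ i
        linarith
      · have h1 := hΦ.2 i (by omega)
        have h2 := hΨ.2 i (by omega)
        show Φ (i + 1) - Ψ (i + 1) = Φ i - Ψ i
        linarith
    exact ⟨Φ 0 - Ψ 0, fun i => by linarith [hstep i]⟩
  · -- solves + APhi for δ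
    intro Φ hΦ
    have hstep' : ∀ i : ℤ, i ≤ L → Φ (i + 1) = Φ i + 1 - del u i := by
      intro i hi
      rcases eq_or_lt_of_le hi with h1 | h1
      · have h2 := hΦ.2 L le_rfl
        rw [hδL1] at h2
        rw [h1, hδL]
        linarith
      · have h2 := hΦ.1 i (by omega)
        linarith
    constructor
    · intro i
      rcases le_or_gt i L with h | h
      · have h1 := hstep' i h
        have h2 := hstep' (i - 1) (by omega)
        rw [show i - 1 + 1 = i from by ring] at h2
        have hb := del_two u (i - 1)
        rw [show i - 1 + 1 = i from by ring] at hb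
        rw [max_eq_left (by linarith : Φ (i - 1) + del u i ≤ Φ (i + 1) + del u i - 1)]
        linarith
      · have h1 := hΦ.2 i h.le
        have h2 := hΦ.2 (i - 1) (by omega)
        rw [show i - 1 + 1 = i from by ring] at h2
        have hb := del_two u i
        rw [max_eq_right (by linarith : Φ (i + 1) + del u i - 1 ≤ Φ (i - 1) + del u i)]
        linarith
    · intro M
      constructor
      · refine ⟨max M (max L (N : ℤ)), le_max_left _ _, ?_⟩
        set N' := max M (max L (N : ℤ)) with hN'
        have hlN : L ≤ N' := le_trans (le_max_left L (N : ℤ)) (le_max_right M _)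
        have hNN : (N : ℤ) ≤ N' := le_trans (le_max_right L (N : ℤ)) (le_max_right M _)
        have h1 := hΦ.2 N' hlN
        have hu0 : u (N' + 1 - 1) = 0 := hAU _ (Or.inl (by omega))
        have hg : del u (N' + 1) = 0 := by
          rw [del, hu0]
          exact min_eq_left (by linarith [(hu (N' + 1)).2])
        linarith
      · refine ⟨max M (max (-L) (N : ℤ)), le_max_left _ _, ?_⟩
        set N'' := max M (max (-L) (N : ℤ)) with hN''
        have hlN : -L ≤ N'' := le_trans (le_max_left (-L) (N : ℤ)) (le_max_right M _)
        have hNN : (N : ℤ) ≤ N'' := le_trans (le_max_right (-L) (N : ℤ)) (le_max_right M _)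
        have h1 := hΦ.1 (-N'' - 1) (by omega)
        rw [show -N'' - 1 + 1 = -N'' from by ring] at h1
        have hu0 : u (-N'' - 1 - 1) = 0 := hAU _ (Or.inr (by omega))
        have hg : del u (-N'' - 1) = 0 := by
          rw [del, hu0]
          exact min_eq_left (by linarith [(hu (-N'' - 1)).2])
        linarith
  · -- explicit evaluation for γ
    intro Φ hΦ
    constructor
    · intro i hi
      have h1 := hΦ.1 i hi
      constructor
      · intro hlt
        rw [gam, min_eq_left (by linarith)] at h1
        linarith
      · intro hge
        rw [gam, min_eq_right (by linarith)] at h1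
        linarith
    · intro i hi
      have h1 := hΦ.2 i hi
      rw [gam, show i + 1 - 1 = i from by ring] at h1
      constructor
      · intro hlt
        rw [min_eq_left (by linarith)] at h1
        linarith
      · intro hge
        rw [min_eq_right (by linarith)] at h1
        linarith
  · -- explicit evaluation for δ
    intro Φ hΦ
    constructor
    · intro i hi
      have h1 := hΦ.1 i hi
      constructor
      · intro hlt
        rw [del, min_eq_left (by linarith)] at h1
        linarith
      · intro hge
        rw [del, min_eq_right (by linarith)] at h1
        linarith
    · intro i hi
      have h1 := hΦ.2 i hi
      rw [del, show i + 1 - 1 = i from by ring] at h1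
      constructor
      · intro hlt
        rw [min_eq_left (by linarith)] at h1
        linarith
      · intro hge
        rw [min_eq_right (by linarith)] at h1
        linarith
end
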